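/- For real f with 0 < f < 1, the identity I₂(f)/(1+f) + I₂(−f)/(1−f) = (π/(2·agm(1+f,1−f)))² holds, where I₂ is Ausserlechner's double integral. -/

import Mathlib

open MeasureTheory Real Filter

/-- Ausserlechner's double integral `I₂(f)`. -/
noncomputable def I2 (f : ℝ) : ℝ :=
  (1 + f) * ∫ p in {p : ℝ × ℝ | 0 < p.2 ∧ p.2 < p.1 ∧ p.1 < π / 2},
    (Real.sqrt (((1 + f) ^ 2 - 4 * f * Real.cos p.1 ^ 2) *
      ((1 + f) ^ 2 - 4 * f * Real.sin p.2 ^ 2)))⁻¹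

/-- The AGM iteration: `agmPair a b n` is the pair `(aₙ, bₙ)` with
`aₙ₊₁ = (aₙ + bₙ)/2` and `bₙ₊₁ = √(aₙ bₙ)`. -/
noncomputable def agmPair (a b : ℝ) : ℕ → ℝ × ℝ
  | 0 => (a, b)
  | n + 1 => (((agmPair a b n).1 + (agmPair a b n).2) / 2,
      Real.sqrt ((agmPair a b n).1 * (agmPair a b n).2))

open Set

lemma integrable_inv_sq_add_sq {c : ℝ} (hc : 0 < c) :
    Integrable (fun t : ℝ => (t ^ 2 + c ^ 2)⁻¹) := by
  have h : (fun t : ℝ => (t ^ 2 + c ^ 2)⁻¹)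
      = fun t : ℝ => c⁻¹ * c⁻¹ * (1 + (t / c) ^ 2)⁻¹ := by
    funext t
    have : (1 + (t / c) ^ 2) = (t ^ 2 + c ^ 2) / c ^ 2 := by field_simp; ring
    rw [this]
    field_simp
  rw [h]
  exact (integrable_inv_one_add_sq.comp_div hc.ne').const_mul _

lemma integral_inv_sq_add_sq' {c : ℝ} (hc : 0 < c) :
    ∫ t in Ioi (0:ℝ), (t ^ 2 + c ^ 2)⁻¹ = π / (2 * c) := by
  have hderiv : ∀ x ∈ Ici (0:ℝ),
      HasDerivAt (fun x : ℝ => c⁻¹ * arctan (x / c)) ((x ^ 2 + c ^ 2)⁻¹) x := by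
    intro x _
    have h1 : HasDerivAt (fun x : ℝ => x / c) c⁻¹ x := by simpa using (hasDerivAt_id x).div_const c
    have h2 := (Real.hasDerivAt_arctan (x / c)).comp x h1
    have h3 := h2.const_mul c⁻¹
    refine h3.congr_deriv ?_
    symm
    have hc2 : (1 + (x / c) ^ 2) = (x ^ 2 + c ^ 2) / c ^ 2 := by field_simp; ring
    rw [hc2]
    field_simp
  have htend : Tendsto (fun x : ℝ => c⁻¹ * arctan (x / c)) atTop (nhds (c⁻¹ * (π / 2))) := by
    apply Tendsto.const_mul
    exact (tendsto_nhds_of_tendsto_nhdsWithin tendsto_arctan_atTop).comp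
      (tendsto_id.atTop_div_const hc)
  have := integral_Ioi_of_hasDerivAt_of_tendsto' hderiv
    ((integrable_inv_sq_add_sq hc).integrableOn) htend
  rw [this]
  simp [arctan_zero]
  ring

noncomputable def Jint (a b : ℝ) : ℝ :=
  ∫ t in Ioi (0:ℝ), (Real.sqrt ((t ^ 2 + a ^ 2) * (t ^ 2 + b ^ 2)))⁻¹

lemma Jfun_cont {a b : ℝ} (ha : 0 < a) (hb : 0 < b) :
    Continuous (fun t : ℝ => (Real.sqrt ((t ^ 2 + a ^ 2) * (t ^ 2 + b ^ 2)))⁻¹) := by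
  apply Continuous.inv₀
  · exact (Real.continuous_sqrt.comp (by continuity))
  · intro t
    have : 0 < (t ^ 2 + a ^ 2) * (t ^ 2 + b ^ 2) := by positivity
    positivity

lemma Jfun_bounds {a b : ℝ} (ha : 0 < a) (hb : b ≤ a) (t : ℝ) (hb0 : 0 < b) :
    (t ^ 2 + a ^ 2)⁻¹ ≤ (Real.sqrt ((t ^ 2 + a ^ 2) * (t ^ 2 + b ^ 2)))⁻¹ ∧
    (Real.sqrt ((t ^ 2 + a ^ 2) * (t ^ 2 + b ^ 2)))⁻¹ ≤ (t ^ 2 + b ^ 2)⁻¹ := by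
  have h1 : (0:ℝ) < t ^ 2 + b ^ 2 := by positivity
  have h2 : (0:ℝ) < t ^ 2 + a ^ 2 := by positivity
  have hs : 0 < Real.sqrt ((t ^ 2 + a ^ 2) * (t ^ 2 + b ^ 2)) :=
    Real.sqrt_pos.2 (by positivity)
  constructor
  · apply inv_anti₀ hs
    calc Real.sqrt ((t ^ 2 + a ^ 2) * (t ^ 2 + b ^ 2))
        ≤ Real.sqrt ((t ^ 2 + a ^ 2) * (t ^ 2 + a ^ 2)) := by
          apply Real.sqrt_le_sqrt; nlinarith [sq_nonneg t, mul_le_mul_of_nonneg_left (sq_le_sq' (by linarith : -a ≤ b) hb : b^2 ≤ a^2) h2.le]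
      _ = t ^ 2 + a ^ 2 := by
          rw [← sq]; exact Real.sqrt_sq h2.le
  · apply inv_anti₀ h1
    calc (t ^ 2 + b ^ 2) = Real.sqrt ((t ^ 2 + b ^ 2) * (t ^ 2 + b ^ 2)) := by
          rw [← sq, Real.sqrt_sq h1.le]
      _ ≤ _ := by apply Real.sqrt_le_sqrt; nlinarith [mul_le_mul_of_nonneg_right (by nlinarith [sq_le_sq' (by linarith : -a ≤ b) hb] : t^2+b^2 ≤ t^2+a^2) h1.le]

lemma Jint_integrableOn {a b : ℝ} (ha : 0 < a) (hb : 0 < b) (hba : b ≤ a) :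
    IntegrableOn (fun t : ℝ => (Real.sqrt ((t ^ 2 + a ^ 2) * (t ^ 2 + b ^ 2)))⁻¹)
      (Ioi (0:ℝ)) := by
  apply Integrable.mono ((integrable_inv_sq_add_sq hb).integrableOn)
    ((Jfun_cont ha hb).aestronglyMeasurable.restrict)
  filter_upwards with t
  have h := Jfun_bounds ha hba t hb
  have hs : 0 < Real.sqrt ((t ^ 2 + a ^ 2) * (t ^ 2 + b ^ 2)) :=
    Real.sqrt_pos.2 (by positivity)
  have h1 : (0:ℝ) < t ^ 2 + b ^ 2 := by positivity
  rw [Real.norm_eq_abs, Real.norm_eq_abs, abs_of_pos (by positivity), abs_of_pos (by positivity)]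
  exact h.2

lemma Jint_bounds {a b : ℝ} (ha : 0 < a) (hb : 0 < b) (hba : b ≤ a) :
    π / (2 * a) ≤ Jint a b ∧ Jint a b ≤ π / (2 * b) := by
  constructor
  · rw [← integral_inv_sq_add_sq' ha]
    apply setIntegral_mono_on ((integrable_inv_sq_add_sq ha).integrableOn)
      (Jint_integrableOn ha hb hba) measurableSet_Ioi
    intro t _
    exact (Jfun_bounds ha hba t hb).1
  · rw [← integral_inv_sq_add_sq' hb]
    apply setIntegral_mono_on (Jint_integrableOn ha hb hba)
      ((integrable_inv_sq_add_sq hb).integrableOn) measurableSet_Ioi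
    intro t _
    exact (Jfun_bounds ha hba t hb).2

lemma sqrt_mul_le_add_div_two {a b : ℝ} (ha : 0 < a) (hb : 0 < b) :
    Real.sqrt (a * b) ≤ (a + b) / 2 := by
  rw [show (a + b) / 2 = Real.sqrt (((a + b) / 2) ^ 2) from
    (Real.sqrt_sq (by positivity)).symm]
  exact Real.sqrt_le_sqrt (by nlinarith [sq_nonneg (a - b)])

lemma Jint_step {a b : ℝ} (ha : 0 < a) (hb : 0 < b) :
    Jint ((a + b) / 2) (Real.sqrt (a * b)) = Jint a b := by
  set a1 : ℝ := (a + b) / 2 with ha1def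
  set b1 : ℝ := Real.sqrt (a * b) with hb1def
  have ha1 : 0 < a1 := by positivity
  have hb1 : 0 < b1 := Real.sqrt_pos.2 (by positivity)
  have hb1sq : b1 ^ 2 = a * b := Real.sq_sqrt (by positivity)
  have hb1a1 : b1 ≤ a1 := sqrt_mul_le_add_div_two ha hb
  set G : ℝ → ℝ := fun u => (Real.sqrt ((u ^ 2 + a1 ^ 2) * (u ^ 2 + b1 ^ 2)))⁻¹ with hGdef
  have hGint : Integrable G := by
    apply Integrable.mono (integrable_inv_sq_add_sq hb1) (Jfun_cont ha1 hb1).aestronglyMeasurable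
    filter_upwards with u
    have h := Jfun_bounds ha1 hb1a1 u hb1
    have hs : 0 < Real.sqrt ((u ^ 2 + a1 ^ 2) * (u ^ 2 + b1 ^ 2)) :=
      Real.sqrt_pos.2 (by positivity)
    rw [Real.norm_eq_abs, Real.norm_eq_abs, abs_of_pos (by positivity),
      abs_of_pos (by positivity)]
    exact h.2
  -- even function: whole-line integral is twice the Ioi 0 integral
  have heven : ∫ u, G u = 2 * Jint a1 b1 := by
    have hsplit := integral_add_compl (s := Iic (0:ℝ)) measurableSet_Iic hGint (f := G)
    have hIic : ∫ u in Iic (0:ℝ), G u = ∫ u in Ioi (0:ℝ), G u := by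
      have := integral_comp_neg_Ioi (0:ℝ) G
      simp only [neg_zero] at this
      rw [← this]
      congr 1
      funext u
      simp [hGdef, neg_sq]
    rw [compl_Iic] at hsplit
    rw [← hsplit, hIic]
    have : Jint a1 b1 = ∫ u in Ioi (0:ℝ), G u := rfl
    rw [this]; ring
  -- change of variables
  set φ : ℝ → ℝ := fun t => (t - a * b / t) / 2 with hφdef
  have himage : φ '' Ioi 0 = univ := by
    apply eq_univ_of_forall
    intro u
    have hsq : Real.sqrt (u ^ 2 + a * b) ^ 2 = u ^ 2 + a * b := Real.sq_sqrt (by positivity)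
    have hgt : |u| < Real.sqrt (u ^ 2 + a * b) := by
      rw [show |u| = Real.sqrt (u ^ 2) from (Real.sqrt_sq_eq_abs u).symm]
      exact Real.sqrt_lt_sqrt (sq_nonneg u) (by nlinarith)
    have ht : 0 < u + Real.sqrt (u ^ 2 + a * b) := by
      have := neg_abs_le u; linarith
    refine ⟨u + Real.sqrt (u ^ 2 + a * b), ht, ?_⟩
    show (_ - a * b / _) / 2 = u
    have h5 : a * b / (u + Real.sqrt (u ^ 2 + a * b)) = Real.sqrt (u ^ 2 + a * b) - u := by
      rw [div_eq_iff ht.ne']; linear_combination -hsq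
    rw [h5]; ring
  have hderiv : ∀ t ∈ Ioi (0:ℝ),
      HasDerivWithinAt φ ((1 + a * b / t ^ 2) / 2) (Ioi 0) t := by
    intro t ht
    have ht0 : (t:ℝ) ≠ 0 := (mem_Ioi.1 ht).ne'
    have h1 : HasDerivAt (fun t : ℝ => (t - a * b * t⁻¹) / 2)
        ((1 - a * b * (-(t ^ 2)⁻¹)) / 2) t :=
      ((hasDerivAt_id t).sub ((hasDerivAt_inv ht0).const_mul (a * b))).div_const 2
    have h2 : φ = fun t : ℝ => (t - a * b * t⁻¹) / 2 := by
      funext x; simp [hφdef, div_eq_mul_inv]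
    rw [h2]
    exact h1.hasDerivWithinAt.congr_deriv (by ring)
  have hinj : InjOn φ (Ioi 0) := by
    intro s hs t ht h
    have hs0 : (0:ℝ) < s := hs
    have ht0 : (0:ℝ) < t := ht
    rw [hφdef] at h
    simp only [div_eq_iff, (by norm_num : (2:ℝ) ≠ 0)] at h
    have h2 : (s - a * b / s) = (t - a * b / t) := by
      field_simp at h ⊢; linarith
    have h3 : (s - t) * (s * t + a * b) = 0 := by
      field_simp at h2
      nlinarith [h2]
    rcases mul_eq_zero.1 h3 with h4 | h4
    · linarith
    · nlinarith
  have hCoV : ∫ u, G u = ∫ t in Ioi (0:ℝ), |(1 + a * b / t ^ 2) / 2| • G (φ t) := by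
    rw [← setIntegral_univ, ← himage]
    exact integral_image_eq_integral_abs_deriv_smul measurableSet_Ioi hderiv hinj G
  have hpt : ∀ t ∈ Ioi (0:ℝ), |(1 + a * b / t ^ 2) / 2| • G (φ t)
      = 2 * (Real.sqrt ((t ^ 2 + a ^ 2) * (t ^ 2 + b ^ 2)))⁻¹ := by
    intro t ht
    have ht0 : (0:ℝ) < t := ht
    set s := Real.sqrt ((t ^ 2 + a ^ 2) * (t ^ 2 + b ^ 2)) with hsdef
    have hs2 : s ^ 2 = (t ^ 2 + a ^ 2) * (t ^ 2 + b ^ 2) := Real.sq_sqrt (by positivity)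
    have hs0 : 0 < s := Real.sqrt_pos.2 (by positivity)
    have key : ((φ t) ^ 2 + a1 ^ 2) * ((φ t) ^ 2 + b1 ^ 2)
        = (s * (t ^ 2 + a * b) / (4 * t ^ 2)) ^ 2 := by
      have hrs : (s * (t ^ 2 + a * b) / (4 * t ^ 2)) ^ 2
          = s ^ 2 * (t ^ 2 + a * b) ^ 2 / (4 * t ^ 2) ^ 2 := by ring
      rw [hrs, hs2, hb1sq, hφdef, ha1def]
      field_simp
      ring
    have hG : G (φ t) = (s * (t ^ 2 + a * b) / (4 * t ^ 2))⁻¹ := by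
      rw [hGdef]
      simp only
      rw [key, Real.sqrt_sq (by positivity)]
    rw [hG, smul_eq_mul, abs_of_pos (by positivity)]
    field_simp
    ring
  have : ∫ u, G u = 2 * Jint a b := by
    rw [hCoV, setIntegral_congr_fun measurableSet_Ioi hpt, integral_const_mul]
    rfl
  have h2 : 2 * Jint a1 b1 = 2 * Jint a b := by rw [← heven, this]
  linarith

lemma Jint_eq_theta {a b : ℝ} (ha : 0 < a) (hb : 0 < b) :
    Jint a b = ∫ x in Ioo 0 (π / 2),
      (Real.sqrt (a ^ 2 * Real.cos x ^ 2 + b ^ 2 * Real.sin x ^ 2))⁻¹ := by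
  set φ : ℝ → ℝ := fun θ => b * Real.tan θ with hφdef
  have hmem : ∀ θ ∈ Ioo 0 (π / 2), θ ∈ Ioo (-(π / 2)) (π / 2) := by
    intro θ hθ
    exact ⟨by have := pi_pos; cases hθ; linarith, hθ.2⟩
  have hcos : ∀ θ ∈ Ioo 0 (π / 2), 0 < Real.cos θ := fun θ hθ =>
    Real.cos_pos_of_mem_Ioo (hmem θ hθ)
  have himage : φ '' Ioo 0 (π / 2) = Ioi 0 := by
    ext t
    constructor
    · rintro ⟨θ, hθ, rfl⟩
      have := Real.tan_pos_of_pos_of_lt_pi_div_two hθ.1 hθ.2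
      exact mul_pos hb this
    · intro ht
      refine ⟨Real.arctan (t / b), ⟨?_, Real.arctan_lt_pi_div_two _⟩, ?_⟩
      · have : Real.arctan 0 < Real.arctan (t / b) :=
          Real.arctan_strictMono (div_pos (mem_Ioi.1 ht) hb)
        rwa [Real.arctan_zero] at this
      · show b * Real.tan (Real.arctan (t / b)) = t
        rw [Real.tan_arctan]
        field_simp
  have hderiv : ∀ θ ∈ Ioo 0 (π / 2),
      HasDerivWithinAt φ (b / Real.cos θ ^ 2) (Ioo 0 (π / 2)) θ := by
    intro θ hθ
    have h1 : HasDerivAt Real.tan (1 / Real.cos θ ^ 2) θ :=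
      Real.hasDerivAt_tan (hcos θ hθ).ne'
    have h2 := h1.const_mul b
    exact h2.hasDerivWithinAt.congr_deriv (by ring)
  have hinj : InjOn φ (Ioo 0 (π / 2)) := by
    intro x hx y hy h
    have h2 : Real.tan x = Real.tan y := by
      have := h
      simp only [hφdef, mul_eq_mul_left_iff, hb.ne', or_false] at this
      exact this
    exact Real.injOn_tan (hmem x hx) (hmem y hy) h2
  have hJ : Jint a b = ∫ θ in Ioo 0 (π / 2), |b / Real.cos θ ^ 2| •
      (Real.sqrt (((φ θ) ^ 2 + a ^ 2) * ((φ θ) ^ 2 + b ^ 2)))⁻¹ := by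
    rw [Jint, ← himage]
    exact integral_image_eq_integral_abs_deriv_smul measurableSet_Ioo hderiv hinj _
  rw [hJ]
  apply setIntegral_congr_fun measurableSet_Ioo
  intro θ hθ
  have hc : 0 < Real.cos θ := hcos θ hθ
  have hsc : Real.sin θ ^ 2 + Real.cos θ ^ 2 = 1 := Real.sin_sq_add_cos_sq θ
  set w := Real.sqrt (a ^ 2 * Real.cos θ ^ 2 + b ^ 2 * Real.sin θ ^ 2) with hwdef
  have hw2 : w ^ 2 = a ^ 2 * Real.cos θ ^ 2 + b ^ 2 * Real.sin θ ^ 2 := by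
    apply Real.sq_sqrt
    positivity
  have hw0 : 0 < w := Real.sqrt_pos.2 (by positivity)
  have htan : Real.tan θ = Real.sin θ / Real.cos θ := Real.tan_eq_sin_div_cos θ
  have key : ((φ θ) ^ 2 + a ^ 2) * ((φ θ) ^ 2 + b ^ 2)
      = (w * b / Real.cos θ ^ 2) ^ 2 := by
    have hrs : (w * b / Real.cos θ ^ 2) ^ 2 = w ^ 2 * b ^ 2 / (Real.cos θ ^ 2) ^ 2 := by
      ring
    rw [hrs, hw2, hφdef]
    simp only
    rw [htan]
    field_simp
    linear_combination (b ^ 2 * Real.sin θ ^ 2 + Real.cos θ ^ 2 * a ^ 2) * hsc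
  show |b / Real.cos θ ^ 2| • (Real.sqrt ((φ θ ^ 2 + a ^ 2) * (φ θ ^ 2 + b ^ 2)))⁻¹
      = (Real.sqrt (a ^ 2 * Real.cos θ ^ 2 + b ^ 2 * Real.sin θ ^ 2))⁻¹
  rw [key, Real.sqrt_sq (by positivity), smul_eq_mul, abs_of_pos (by positivity)]
  rw [← hwdef]
  field_simp

lemma refl_integral {a b : ℝ} :
    ∫ x in Ioo 0 (π / 2), (Real.sqrt (b ^ 2 * Real.cos x ^ 2 + a ^ 2 * Real.sin x ^ 2))⁻¹
    = ∫ x in Ioo 0 (π / 2),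
      (Real.sqrt (a ^ 2 * Real.cos x ^ 2 + b ^ 2 * Real.sin x ^ 2))⁻¹ := by
  set φ : ℝ → ℝ := fun x => π / 2 - x with hφdef
  have himage : φ '' Ioo 0 (π / 2) = Ioo 0 (π / 2) := by
    rw [hφdef]
    rw [show (fun x => π / 2 - x) '' Ioo 0 (π / 2) = Ioo (π/2 - π/2) (π/2 - 0) from
      Set.image_const_sub_Ioo _ _ _]
    norm_num
  have hderiv : ∀ x ∈ Ioo 0 (π / 2),
      HasDerivWithinAt φ (-1) (Ioo 0 (π / 2)) x := by
    intro x _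
    have : HasDerivAt φ (0 - 1) x := (hasDerivAt_const x (π/2)).sub (hasDerivAt_id x)
    simpa using this.hasDerivWithinAt
  have hinj : InjOn φ (Ioo 0 (π / 2)) := by
    intro x _ y _ h
    simp only [hφdef] at h
    linarith [h]
  conv_lhs => rw [← himage]
  rw [integral_image_eq_integral_abs_deriv_smul measurableSet_Ioo hderiv hinj _]
  apply setIntegral_congr_fun measurableSet_Ioo
  intro x _
  simp only [hφdef, Real.cos_pi_div_two_sub, Real.sin_pi_div_two_sub, smul_eq_mul]
  rw [abs_neg, abs_one, one_mul, add_comm]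

lemma agm_props (a b : ℝ) (hb : 0 < b) (hba : b ≤ a) (n : ℕ) :
    0 < (agmPair a b n).2 ∧ (agmPair a b n).2 ≤ (agmPair a b n).1 := by
  induction n with
  | zero => exact ⟨hb, hba⟩
  | succ n ih =>
    obtain ⟨h1, h2⟩ := ih
    have hA : 0 < (agmPair a b n).1 := h1.trans_le h2
    refine ⟨Real.sqrt_pos.2 (by positivity), ?_⟩
    exact sqrt_mul_le_add_div_two hA h1

lemma agm_mono (a b : ℝ) (hb : 0 < b) (hba : b ≤ a) :
    Monotone (fun n => (agmPair a b n).2) ∧ Antitone (fun n => (agmPair a b n).1) := by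
  constructor
  · apply monotone_nat_of_le_succ
    intro n
    obtain ⟨h1, h2⟩ := agm_props a b hb hba n
    have hA : 0 < (agmPair a b n).1 := h1.trans_le h2
    show (agmPair a b n).2 ≤ Real.sqrt ((agmPair a b n).1 * (agmPair a b n).2)
    calc (agmPair a b n).2 = Real.sqrt ((agmPair a b n).2 ^ 2) :=
          (Real.sqrt_sq h1.le).symm
      _ ≤ _ := Real.sqrt_le_sqrt (by nlinarith)
  · apply antitone_nat_of_succ_le
    intro n
    obtain ⟨h1, h2⟩ := agm_props a b hb hba n
    show ((agmPair a b n).1 + (agmPair a b n).2) / 2 ≤ (agmPair a b n).1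
    linarith

lemma Jint_eq_pi_div (a b L : ℝ) (hb : 0 < b) (hba : b ≤ a)
    (hA : Tendsto (fun n => (agmPair a b n).1) atTop (nhds L))
    (hB : Tendsto (fun n => (agmPair a b n).2) atTop (nhds L)) :
    Jint a b = π / (2 * L) := by
  obtain ⟨hmono, hanti⟩ := agm_mono a b hb hba
  have hBle : ∀ n, (agmPair a b n).2 ≤ L := fun n => hmono.ge_of_tendsto hB n
  have hAle : ∀ n, L ≤ (agmPair a b n).1 := fun n => hanti.le_of_tendsto hA n
  have hL : 0 < L := lt_of_lt_of_le hb (hBle 0)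
  have hinv : ∀ n, Jint (agmPair a b n).1 (agmPair a b n).2 = Jint a b := by
    intro n
    induction n with
    | zero => rfl
    | succ n ih =>
      obtain ⟨h1, h2⟩ := agm_props a b hb hba n
      have hA0 : 0 < (agmPair a b n).1 := h1.trans_le h2
      rw [← ih, ← Jint_step hA0 h1]
      rfl
  have hub : ∀ n, Jint a b ≤ π / (2 * (agmPair a b n).2) := by
    intro n
    obtain ⟨h1, h2⟩ := agm_props a b hb hba n
    rw [← hinv n]
    exact (Jint_bounds (h1.trans_le h2) h1 h2).2
  have hlb : ∀ n, π / (2 * (agmPair a b n).1) ≤ Jint a b := by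
    intro n
    obtain ⟨h1, h2⟩ := agm_props a b hb hba n
    rw [← hinv n]
    exact (Jint_bounds (h1.trans_le h2) h1 h2).1
  have htB : Tendsto (fun n => π / (2 * (agmPair a b n).2)) atTop (nhds (π / (2 * L))) :=
    tendsto_const_nhds.div (hB.const_mul 2) (by positivity)
  have htA : Tendsto (fun n => π / (2 * (agmPair a b n).1)) atTop (nhds (π / (2 * L))) :=
    tendsto_const_nhds.div (hA.const_mul 2) (by positivity)
  have h1 : Jint a b ≤ π / (2 * L) := ge_of_tendsto htB (Eventually.of_forall hub)
  have h2 : π / (2 * L) ≤ Jint a b := le_of_tendsto htA (Eventually.of_forall hlb)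
  linarith

lemma trig_id1 (u x : ℝ) : (1 + u) ^ 2 - 4 * u * Real.cos x ^ 2
    = (1 - u) ^ 2 * Real.cos x ^ 2 + (1 + u) ^ 2 * Real.sin x ^ 2 := by
  linear_combination (-(1 + u) ^ 2) * Real.sin_sq_add_cos_sq x

lemma trig_id2 (u x : ℝ) : (1 + u) ^ 2 - 4 * u * Real.sin x ^ 2
    = (1 + u) ^ 2 * Real.cos x ^ 2 + (1 - u) ^ 2 * Real.sin x ^ 2 := by
  linear_combination (-(1 + u) ^ 2) * Real.sin_sq_add_cos_sq x

lemma trig_id3 (u x : ℝ) : (1 - u) ^ 2 - 4 * -u * Real.cos x ^ 2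
    = (1 + u) ^ 2 * Real.cos x ^ 2 + (1 - u) ^ 2 * Real.sin x ^ 2 := by
  linear_combination (-(1 - u) ^ 2) * Real.sin_sq_add_cos_sq x

lemma trig_id4 (u x : ℝ) : (1 - u) ^ 2 - 4 * -u * Real.sin x ^ 2
    = (1 - u) ^ 2 * Real.cos x ^ 2 + (1 + u) ^ 2 * Real.sin x ^ 2 := by
  linear_combination (-(1 - u) ^ 2) * Real.sin_sq_add_cos_sq x

lemma diag_null : (volume : Measure (ℝ × ℝ)) {p : ℝ × ℝ | p.1 = p.2} = 0 := by
  have hker : {p : ℝ × ℝ | p.1 = p.2}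
      = (LinearMap.ker (LinearMap.fst ℝ ℝ ℝ - LinearMap.snd ℝ ℝ ℝ) : Set (ℝ × ℝ)) := by
    ext p
    simp [LinearMap.mem_ker, LinearMap.sub_apply, sub_eq_zero]
  rw [hker]
  apply Measure.addHaar_submodule
  intro htop
  have h1 : ((1, 0) : ℝ × ℝ) ∈ LinearMap.ker (LinearMap.fst ℝ ℝ ℝ - LinearMap.snd ℝ ℝ ℝ) := by
    rw [htop]; trivial
  simp [LinearMap.mem_ker, LinearMap.sub_apply] at h1

theorem stmt17 (f : ℝ) (hf : f ∈ Set.Ioo (0:ℝ) 1) (L : ℝ)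
    (hA : Tendsto (fun n => (agmPair (1 + f) (1 - f) n).1) atTop (nhds L))
    (hB : Tendsto (fun n => (agmPair (1 + f) (1 - f) n).2) atTop (nhds L)) :
    I2 f / (1 + f) + I2 (-f) / (1 - f) = (π / (2 * L)) ^ 2 := by
  obtain ⟨hf0, hf1⟩ := hf
  have ha : (0:ℝ) < 1 + f := by linarith
  have hb : (0:ℝ) < 1 - f := by linarith
  have hba : 1 - f ≤ 1 + f := by linarith
  set g : ℝ → ℝ := fun x =>
    (Real.sqrt ((1 + f) ^ 2 * Real.cos x ^ 2 + (1 - f) ^ 2 * Real.sin x ^ 2))⁻¹ with hgdef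
  set h : ℝ → ℝ := fun x =>
    (Real.sqrt ((1 - f) ^ 2 * Real.cos x ^ 2 + (1 + f) ^ 2 * Real.sin x ^ 2))⁻¹ with hhdef
  set T : Set (ℝ × ℝ) := {p : ℝ × ℝ | 0 < p.2 ∧ p.2 < p.1 ∧ p.1 < π / 2} with hTdef
  set T' : Set (ℝ × ℝ) := {p : ℝ × ℝ | 0 < p.1 ∧ p.1 < p.2 ∧ p.2 < π / 2} with hT'def
  set S : Set (ℝ × ℝ) := Set.Ioo 0 (π / 2) ×ˢ Set.Ioo 0 (π / 2) with hSdef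
  -- positivity and bounds for g, h
  have hgpos : ∀ x : ℝ, (0:ℝ) < (1 + f) ^ 2 * Real.cos x ^ 2 + (1 - f) ^ 2 * Real.sin x ^ 2 := by
    intro x
    nlinarith [Real.sin_sq_add_cos_sq x, mul_nonneg hf0.le (sq_nonneg (Real.cos x)),
      mul_pos hb hb]
  have hhpos : ∀ x : ℝ, (0:ℝ) < (1 - f) ^ 2 * Real.cos x ^ 2 + (1 + f) ^ 2 * Real.sin x ^ 2 := by
    intro x
    nlinarith [Real.sin_sq_add_cos_sq x, mul_nonneg hf0.le (sq_nonneg (Real.sin x)),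
      mul_pos hb hb]
  have hgcont : Continuous g := by
    apply Continuous.inv₀ (Real.continuous_sqrt.comp (by continuity))
    intro x
    exact (Real.sqrt_pos.2 (hgpos x)).ne'
  have hhcont : Continuous h := by
    apply Continuous.inv₀ (Real.continuous_sqrt.comp (by continuity))
    intro x
    exact (Real.sqrt_pos.2 (hhpos x)).ne'
  have hgb : ∀ x : ℝ, g x ≤ (1 - f)⁻¹ := by
    intro x
    rw [hgdef]
    simp only
    apply inv_anti₀ hb
    apply Real.le_sqrt_of_sq_le
    nlinarith [Real.sin_sq_add_cos_sq x, mul_nonneg hf0.le (sq_nonneg (Real.cos x))]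
  have hhb : ∀ x : ℝ, h x ≤ (1 - f)⁻¹ := by
    intro x
    rw [hhdef]
    simp only
    apply inv_anti₀ hb
    apply Real.le_sqrt_of_sq_le
    nlinarith [Real.sin_sq_add_cos_sq x, mul_nonneg hf0.le (sq_nonneg (Real.sin x))]
  have hgnn : ∀ x : ℝ, 0 ≤ g x := fun x => by positivity
  have hhnn : ∀ x : ℝ, 0 ≤ h x := fun x => by positivity
  have hT : MeasurableSet T := by
    have hTe : T = {p : ℝ × ℝ | 0 < p.2} ∩ ({p | p.2 < p.1} ∩ {p | p.1 < π / 2}) := rfl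
    rw [hTe]
    exact (measurableSet_lt measurable_const measurable_snd).inter
      ((measurableSet_lt measurable_snd measurable_fst).inter
        (measurableSet_lt measurable_fst measurable_const))
  have hT' : MeasurableSet T' := by
    have hTe : T' = {p : ℝ × ℝ | 0 < p.1} ∩ ({p | p.1 < p.2} ∩ {p | p.2 < π / 2}) := rfl
    rw [hTe]
    exact (measurableSet_lt measurable_const measurable_fst).inter
      ((measurableSet_lt measurable_fst measurable_snd).inter
        (measurableSet_lt measurable_snd measurable_const))
  have hSfin : volume S ≠ ⊤ := by
    rw [hSdef, Measure.volume_eq_prod ℝ ℝ, Measure.prod_prod, Real.volume_Ioo]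
    exact ENNReal.mul_ne_top ENNReal.ofReal_ne_top ENNReal.ofReal_ne_top
  set F : ℝ × ℝ → ℝ := fun p => h p.1 * g p.2 with hFdef
  have hFcont : Continuous F := (hhcont.comp continuous_fst).mul (hgcont.comp continuous_snd)
  have hFS : IntegrableOn F S := by
    apply Measure.integrableOn_of_bounded (M := (1 - f)⁻¹ * (1 - f)⁻¹) hSfin
      hFcont.aestronglyMeasurable
    filter_upwards with p
    rw [Real.norm_eq_abs, abs_of_nonneg (mul_nonneg (hhnn p.1) (hgnn p.2))]
    exact mul_le_mul (hhb p.1) (hgb p.2) (hgnn p.2) (by positivity)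
  have hTS : T ⊆ S := by
    intro p hp
    exact ⟨⟨hp.1.trans hp.2.1, hp.2.2⟩, ⟨hp.1, hp.2.1.trans hp.2.2⟩⟩
  have hT'S : T' ⊆ S := by
    intro p hp
    exact ⟨⟨hp.1, hp.2.1.trans hp.2.2⟩, ⟨hp.1.trans hp.2.1, hp.2.2⟩⟩
  have hFT : IntegrableOn F T := hFS.mono_set hTS
  have hFT' : IntegrableOn F T' := hFS.mono_set hT'S
  -- rewrite the two integrals
  have key1 : I2 f / (1 + f) = ∫ p in T, F p := by
    rw [I2, mul_div_cancel_left₀ _ ha.ne']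
    apply setIntegral_congr_fun hT
    intro p _
    show (Real.sqrt (((1 + f) ^ 2 - 4 * f * Real.cos p.1 ^ 2) *
        ((1 + f) ^ 2 - 4 * f * Real.sin p.2 ^ 2)))⁻¹ = h p.1 * g p.2
    rw [trig_id1 f p.1, trig_id2 f p.2,
      Real.sqrt_mul (hhpos p.1).le, mul_inv]
  have key2 : I2 (-f) / (1 - f) = ∫ p in T, g p.1 * h p.2 := by
    have hneg : (1 : ℝ) + -f = 1 - f := by ring
    rw [I2, hneg, mul_div_cancel_left₀ _ hb.ne']
    apply setIntegral_congr_fun hT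
    intro p _
    show (Real.sqrt (((1 - f) ^ 2 - 4 * -f * Real.cos p.1 ^ 2) *
        ((1 - f) ^ 2 - 4 * -f * Real.sin p.2 ^ 2)))⁻¹ = g p.1 * h p.2
    rw [trig_id3 f p.1, trig_id4 f p.2,
      Real.sqrt_mul (hgpos p.1).le, mul_inv]
  -- swap symmetry
  have hswapMP : MeasurePreserving (Prod.swap : ℝ × ℝ → ℝ × ℝ) volume volume := by
    have := Measure.measurePreserving_swap (μ := (volume : Measure ℝ)) (ν := (volume : Measure ℝ))
    rwa [← Measure.volume_eq_prod ℝ ℝ] at this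
  have hswapEmb : MeasurableEmbedding (Prod.swap : ℝ × ℝ → ℝ × ℝ) :=
    (MeasurableEquiv.prodComm : ℝ × ℝ ≃ᵐ ℝ × ℝ).measurableEmbedding
  have hswap := hswapMP.setIntegral_preimage_emb hswapEmb F T'
  have hpre : (Prod.swap : ℝ × ℝ → ℝ × ℝ) ⁻¹' T' = T := by
    ext p
    simp only [hTdef, hT'def, Set.mem_preimage, Set.mem_setOf_eq, Prod.fst_swap, Prod.snd_swap]
  rw [hpre] at hswap
  have key3 : ∫ p in T, g p.1 * h p.2 = ∫ p in T', F p := by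
    rw [← hswap]
    apply setIntegral_congr_fun hT
    intro p _
    show g p.1 * h p.2 = F (Prod.swap p)
    rw [hFdef]
    simp only [Prod.fst_swap, Prod.snd_swap]
    ring
  -- combine over union
  have hdisj : Disjoint T T' := by
    rw [Set.disjoint_left]
    intro p hp hp'
    have h1 : p.2 < p.1 := hp.2.1
    have h2 : p.1 < p.2 := hp'.2.1
    linarith
  have hunion : ∫ p in T ∪ T', F p = (∫ p in T, F p) + ∫ p in T', F p :=
    setIntegral_union hdisj hT' hFT hFT'
  have hae : (T ∪ T' : Set (ℝ × ℝ)) =ᵐ[volume] S := by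
    rw [MeasureTheory.ae_eq_set]
    constructor
    · rw [Set.diff_eq_empty.2 (Set.union_subset hTS hT'S)]
      exact measure_empty
    · apply measure_mono_null _ diag_null
      intro p hp
      obtain ⟨hpS, hpn⟩ := hp
      show p.1 = p.2
      by_contra hne
      rcases lt_or_gt_of_ne hne with hlt | hgt
      · exact hpn (Or.inr ⟨hpS.1.1, hlt, hpS.2.2⟩)
      · exact hpn (Or.inl ⟨hpS.2.1, hgt, hpS.1.2⟩)
  have hprod : ∫ p in S, F p
      = (∫ x in Set.Ioo 0 (π / 2), h x) * ∫ x in Set.Ioo 0 (π / 2), g x := by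
    rw [hSdef, Measure.volume_eq_prod ℝ ℝ]
    exact setIntegral_prod_mul h g _ _
  have hhg : ∫ x in Set.Ioo 0 (π / 2), h x = ∫ x in Set.Ioo 0 (π / 2), g x :=
    refl_integral (a := 1 + f) (b := 1 - f)
  have hgJ : ∫ x in Set.Ioo 0 (π / 2), g x = π / (2 * L) := by
    rw [← Jint_eq_theta ha hb]
    exact Jint_eq_pi_div (1 + f) (1 - f) L hb hba hA hB
  rw [key1, key2, key3, ← hunion, setIntegral_congr_set hae, hprod, hhg, hgJ]
  ring
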